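/- Consider worker momentum m_{i,t} = α g_i(x_{t-1}) + (1-α)m_{i,t-1} with α ∈ (0,1], α_1 = 1, where for good workers i, j the stochastic gradients are independent and unbiased with variance at most σ². Then for all t ≥ 1, E‖m_{i,t} - m_{j,t}‖² ≤ 2σ²(α + (1-α)^{t-1}). -/

import Mathlib

open MeasureTheory

lemma aux_integrable_inner {Ω : Type*} {mΩ : MeasurableSpace Ω} {μ : Measure Ω}
    {E : Type*} [NormedAddCommGroup E] [InnerProductSpace ℝ E]
    {f g : Ω → E} (hf : MemLp f 2 μ) (hg : MemLp g 2 μ) :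
    Integrable (fun ω => (inner ℝ (f ω) (g ω) : ℝ)) μ := by
  have h := L2.integrable_inner (𝕜 := ℝ) (hf.toLp f) (hg.toLp g)
  apply h.congr
  filter_upwards [hf.coeFn_toLp, hg.coeFn_toLp] with ω h1 h2
  rw [h1, h2]

lemma aux_cross_zero {Ω : Type*} {mΩ : MeasurableSpace Ω} {μ : Measure Ω}
    [IsProbabilityMeasure μ] {d : ℕ} {Fn : Unit → MeasurableSpace Ω} (hm : Fn () ≤ mΩ)
    {X Y : Ω → EuclideanSpace ℝ (Fin d)}
    (hX : StronglyMeasurable[Fn ()] X)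
    (hX2 : MemLp X 2 μ) (hY2 : MemLp Y 2 μ)
    (hY0 : μ[Y|Fn ()] =ᵐ[μ] fun _ => 0) :
    ∫ ω, (inner ℝ (X ω) (Y ω) : ℝ) ∂μ = 0 := by
  have hYint : Integrable Y μ := hY2.integrable (by norm_num)
  -- coordinate functions
  have hXk2 : ∀ k : Fin d, MemLp (fun ω => X ω k) 2 μ := fun k =>
    (EuclideanSpace.proj k : EuclideanSpace ℝ (Fin d) →L[ℝ] ℝ).comp_memLp' hX2
  have hYk2 : ∀ k : Fin d, MemLp (fun ω => Y ω k) 2 μ := fun k =>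
    (EuclideanSpace.proj k : EuclideanSpace ℝ (Fin d) →L[ℝ] ℝ).comp_memLp' hY2
  have hXk : ∀ k : Fin d, StronglyMeasurable[Fn ()] (fun ω => X ω k) := fun k =>
    (EuclideanSpace.proj k : EuclideanSpace ℝ (Fin d) →L[ℝ] ℝ).continuous.comp_stronglyMeasurable hX
  -- coordinates of Y are conditionally zero mean
  have hYk0 : ∀ k : Fin d, μ[fun ω => Y ω k|Fn ()] =ᵐ[μ] fun _ => 0 := by
    intro k
    have h := ae_eq_condExp_of_forall_setIntegral_eq hm
      (f := fun ω => Y ω k) (g := fun _ => (0:ℝ))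
      ((EuclideanSpace.proj k : EuclideanSpace ℝ (Fin d) →L[ℝ] ℝ).integrable_comp hYint)
      (fun s _ _ => (integrable_const 0).integrableOn)
      ?_ ?_
    · exact h.symm
    · intro s hs hμs
      have hY0s : ∫ ω in s, Y ω ∂μ = 0 := by
        rw [← setIntegral_condExp hm hYint hs]
        calc ∫ ω in s, (μ[Y|Fn ()]) ω ∂μ = ∫ _ω in s, (0 : EuclideanSpace ℝ (Fin d)) ∂μ :=
              setIntegral_congr_ae (hm s hs) (hY0.mono fun ω h _ => h)
          _ = 0 := by simp
      have : ∫ ω in s, Y ω k ∂μ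
          = (EuclideanSpace.proj k : EuclideanSpace ℝ (Fin d) →L[ℝ] ℝ) (∫ ω in s, Y ω ∂μ) := by
        have h := (EuclideanSpace.proj (𝕜 := ℝ) k).integral_comp_comm
          (hYint.integrableOn (s := s))
        exact h
      rw [this, hY0s]
      simp
    · exact stronglyMeasurable_const.aestronglyMeasurable
  -- cross terms coordinatewise
  have hmulint : ∀ k : Fin d, Integrable (fun ω => X ω k * Y ω k) μ := by
    intro k
    have := aux_integrable_inner (E := ℝ) (hXk2 k) (hYk2 k)
    simpa [RCLike.inner_apply, mul_comm] using this
  have hcoord : ∀ k : Fin d, ∫ ω, X ω k * Y ω k ∂μ = 0 := by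
    intro k
    have hmul : μ[fun ω => X ω k * Y ω k|Fn ()]
        =ᵐ[μ] fun ω => X ω k * (μ[fun ω => Y ω k|Fn ()]) ω :=
      condExp_mul_of_stronglyMeasurable_left (hXk k) (hmulint k) ((hYk2 k).integrable (by norm_num))
    have hzero : μ[fun ω => X ω k * Y ω k|Fn ()] =ᵐ[μ] fun _ => 0 := by
      filter_upwards [hmul, hYk0 k] with ω h1 h2
      rw [h1, h2]; ring
    rw [← integral_condExp hm, integral_congr_ae hzero]
    simp
  -- expand the inner product
  have hinner : ∀ ω, (inner ℝ (X ω) (Y ω) : ℝ) = ∑ k : Fin d, X ω k * Y ω k := by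
    intro ω
    simp [PiLp.inner_apply, RCLike.inner_apply, mul_comm]
  calc ∫ ω, (inner ℝ (X ω) (Y ω) : ℝ) ∂μ = ∫ ω, ∑ k : Fin d, X ω k * Y ω k ∂μ := by
        simp_rw [hinner]
    _ = ∑ k : Fin d, ∫ ω, X ω k * Y ω k ∂μ := integral_finset_sum _ (fun k _ => hmulint k)
    _ = 0 := by simp [hcoord]


/-- Worker momentum contracts pairwise distance: if two good workers use
`m_{·,t} = α g_·(t) + (1-α) m_{·,t-1}` (with `α₁ = 1`, i.e. `m_{·,1} = g_·(1)`), where the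
difference of their stochastic gradients is conditionally zero mean (independent unbiased
gradients at the common iterate) with `E‖g_i(t) - g_j(t)‖² ≤ 2σ²`, then for all `t ≥ 1`,
`E‖m_{i,t} - m_{j,t}‖² ≤ 2σ²(α + (1-α)^{t-1})`. -/
theorem worker_momentum_pairwise_distance {Ω : Type*} {mΩ : MeasurableSpace Ω}
    (μ : Measure Ω) [IsProbabilityMeasure μ] {d : ℕ}
    (σ α : ℝ) (hσ : 0 ≤ σ) (hα0 : 0 < α) (hα1 : α ≤ 1)
    (F : ℕ → MeasurableSpace Ω) (hF : ∀ t, F t ≤ mΩ) (hFmono : Monotone F)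
    (mi mj gi gj : ℕ → Ω → EuclideanSpace ℝ (Fin d))
    -- momentum recursions, with `α₁ = 1`
    (hbasei : ∀ ω, mi 1 ω = gi 1 ω) (hbasej : ∀ ω, mj 1 ω = gj 1 ω)
    (hreci : ∀ t ≥ 2, ∀ ω, mi t ω = α • gi t ω + (1 - α) • mi (t - 1) ω)
    (hrecj : ∀ t ≥ 2, ∀ ω, mj t ω = α • gj t ω + (1 - α) • mj (t - 1) ω)
    -- momenta are adapted to the filtration
    (hadpi : ∀ t, StronglyMeasurable[F t] (mi t))
    (hadpj : ∀ t, StronglyMeasurable[F t] (mj t))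
    -- the gradient difference of two good workers is conditionally zero mean …
    (hunbiased : ∀ t ≥ 1, μ[fun ω => gi t ω - gj t ω|F (t - 1)] =ᵐ[μ] fun _ => 0)
    -- … with second moment at most `2σ²` (independence and variance ≤ σ² each)
    (hvar : ∀ t ≥ 1, (∫ ω, ‖gi t ω - gj t ω‖ ^ 2 ∂μ) ≤ 2 * σ ^ 2)
    -- integrability
    (hint : ∀ t, Integrable (fun ω => ‖mi t ω - mj t ω‖ ^ 2) μ)
    (hintg : ∀ t, Integrable (fun ω => ‖gi t ω - gj t ω‖ ^ 2) μ) :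
    ∀ t ≥ 1, (∫ ω, ‖mi t ω - mj t ω‖ ^ 2 ∂μ)
      ≤ 2 * σ ^ 2 * (α + (1 - α) ^ (t - 1)) := by
  set D : ℕ → Ω → EuclideanSpace ℝ (Fin d) := fun t ω => mi t ω - mj t ω with hD
  set G : ℕ → Ω → EuclideanSpace ℝ (Fin d) := fun t ω => gi t ω - gj t ω with hG
  have hDsm : ∀ t, StronglyMeasurable[F t] (D t) := fun t => (hadpi t).sub (hadpj t)
  have hD2 : ∀ t, MemLp (D t) 2 μ := fun t =>
    (memLp_two_iff_integrable_sq_norm ((hDsm t).mono (hF t)).aestronglyMeasurable).mpr (hint t)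
  -- D recursion
  have hDrec : ∀ t ≥ 2, ∀ ω, D t ω = α • G t ω + (1 - α) • D (t - 1) ω := by
    intro t ht ω
    simp only [hD, hG, hreci t ht ω, hrecj t ht ω, smul_sub]
    abel
  have hDbase : ∀ ω, D 1 ω = G 1 ω := fun ω => by
    simp only [hD, hG, hbasei ω, hbasej ω]
  -- G is strongly measurable
  have hGsm : ∀ t, 1 ≤ t → StronglyMeasurable (G t) := by
    intro t ht
    rcases eq_or_lt_of_le ht with h1 | h2
    · have : G t = D t := by funext ω; rw [← h1, hDbase ω]
      rw [this]; exact (hDsm t).mono (hF t)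
    · have h2' : 2 ≤ t := h2
      have : G t = fun ω => α⁻¹ • (D t ω - (1 - α) • D (t - 1) ω) := by
        funext ω
        have h := hDrec t h2' ω
        have : α • G t ω = D t ω - (1 - α) • D (t - 1) ω := by
          rw [h]; abel
        rw [← this, inv_smul_smul₀ hα0.ne']
      rw [this]
      exact (((hDsm t).mono (hF t)).sub
        (((hDsm (t - 1)).mono (hF (t - 1))).const_smul (1 - α))).const_smul α⁻¹
  have hG2 : ∀ t, 1 ≤ t → MemLp (G t) 2 μ := fun t ht =>
    (memLp_two_iff_integrable_sq_norm (hGsm t ht).aestronglyMeasurable).mpr (hintg t)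
  intro t ht
  induction t, ht using Nat.le_induction with
  | base =>
    have : (∫ ω, ‖D 1 ω‖ ^ 2 ∂μ) = ∫ ω, ‖G 1 ω‖ ^ 2 ∂μ := by
      congr 1; funext ω; rw [hDbase ω]
    simp only [hD, hG] at this ⊢
    rw [show (1:ℕ) - 1 = 0 from rfl, pow_zero]
    have h1 := hvar 1 le_rfl
    nlinarith [sq_nonneg σ]
  | succ t ht IH =>
    have ht2 : 2 ≤ t + 1 := by omega
    have hsub : t + 1 - 1 = t := by omega
    -- pointwise expansion
    have hpt : ∀ ω, ‖D (t + 1) ω‖ ^ 2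
        = α ^ 2 * ‖G (t + 1) ω‖ ^ 2 + (1 - α) ^ 2 * ‖D t ω‖ ^ 2
          + (2 * (α * (1 - α))) * (inner ℝ (D t ω) (G (t + 1) ω) : ℝ) := by
      intro ω
      have h := hDrec (t + 1) ht2 ω
      rw [hsub] at h
      rw [h, norm_add_sq_real]
      rw [norm_smul, norm_smul, real_inner_smul_left, real_inner_smul_right]
      rw [real_inner_comm]
      have hn1 : |α| = α := abs_of_pos hα0
      have hn2 : ‖(1:ℝ) - α‖ = 1 - α := Real.norm_of_nonneg (by linarith)
      simp only [Real.norm_eq_abs, hn1, hn2]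
      ring
    have hIcross : Integrable (fun ω => (inner ℝ (D t ω) (G (t + 1) ω) : ℝ)) μ :=
      aux_integrable_inner (hD2 t) (hG2 (t + 1) (by omega))
    -- integral expansion
    have hsplit : (∫ ω, ‖D (t + 1) ω‖ ^ 2 ∂μ)
        = α ^ 2 * (∫ ω, ‖G (t + 1) ω‖ ^ 2 ∂μ) + (1 - α) ^ 2 * (∫ ω, ‖D t ω‖ ^ 2 ∂μ)
          + (2 * (α * (1 - α))) * ∫ ω, (inner ℝ (D t ω) (G (t + 1) ω) : ℝ) ∂μ := by
      rw [show (fun ω => ‖D (t + 1) ω‖ ^ 2)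
          = fun ω => α ^ 2 * ‖G (t + 1) ω‖ ^ 2 + (1 - α) ^ 2 * ‖D t ω‖ ^ 2
            + (2 * (α * (1 - α))) * (inner ℝ (D t ω) (G (t + 1) ω) : ℝ) from funext hpt]
      have hIG : Integrable (fun ω => ‖G (t + 1) ω‖ ^ 2) μ := hintg (t + 1)
      have hID : Integrable (fun ω => ‖D t ω‖ ^ 2) μ := hint t
      have hIGD : Integrable
          (fun ω => α ^ 2 * ‖G (t + 1) ω‖ ^ 2 + (1 - α) ^ 2 * ‖D t ω‖ ^ 2) μ :=
        (hIG.const_mul _).add (hID.const_mul _)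
      have hIC2 : Integrable
          (fun ω => (2 * (α * (1 - α))) * (inner ℝ (D t ω) (G (t + 1) ω) : ℝ)) μ :=
        hIcross.const_mul _
      rw [integral_add hIGD hIC2,
        integral_add (hIG.const_mul (α ^ 2)) (hID.const_mul ((1 - α) ^ 2)),
        integral_const_mul, integral_const_mul, integral_const_mul]
    -- cross term vanishes
    have hcross : (∫ ω, (inner ℝ (D t ω) (G (t + 1) ω) : ℝ) ∂μ) = 0 := by
      refine aux_cross_zero (Fn := fun _ : Unit => F t) (hF t) (hDsm t) (hD2 t)
        (hG2 (t + 1) (by omega)) ?_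
      have h := hunbiased (t + 1) (by omega)
      rw [hsub] at h
      exact h
    have hEd0 : 0 ≤ ∫ ω, ‖D t ω‖ ^ 2 ∂μ := integral_nonneg fun ω => sq_nonneg _
    have hvar' := hvar (t + 1) (by omega)
    have hIH : (∫ ω, ‖D t ω‖ ^ 2 ∂μ) ≤ 2 * σ ^ 2 * (α + (1 - α) ^ (t - 1)) := IH
    have hpow : (1 - α) ^ (t + 1 - 1) = (1 - α) ^ (t - 1) * (1 - α) := by
      rw [hsub, ← pow_succ]
      congr 1
      omega
    have hP : (0:ℝ) ≤ (1 - α) ^ (t - 1) := pow_nonneg (by linarith) _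
    simp only [hD, hG] at hsplit hcross hEd0 hIH hvar' ⊢
    rw [hsplit, hcross, hpow]
    nlinarith [sq_nonneg σ, mul_nonneg (mul_nonneg (by linarith : (0:ℝ) ≤ 1 - α) hα0.le)
      (sq_nonneg σ), mul_nonneg hP (mul_nonneg (by linarith : (0:ℝ) ≤ 1 - α) hα0.le),
      mul_nonneg (mul_nonneg (by linarith : (0:ℝ) ≤ 1 - α) hα0.le) hEd0]
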